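/- If f : [0,1] → ℝ is absolutely continuous, f' ∈ L¹(0,1), and γ₁ ≤ f'(t) for all t ∈ [0,1], then |Q(f)| ≤ (1/2 - √2/8)(S - γ₁), where S = f(1) - f(0) and Q(f) = ∫₀¹ f(t) dt - (√2/8) f(0) - (1 - √2/4) f(1/2) - (√2/8) f(1). -/

import Mathlib

open MeasureTheory Real Set

/-- Fubini for the primitive: `∫₀¹ (∫₀ᵗ g) dt = ∫₀¹ (1-s) g(s) ds`. -/
lemma fubini_aux (g : ℝ → ℝ) (hg : IntegrableOn g (Ioc (0:ℝ) 1)) :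
    (∫ t in (0:ℝ)..1, ∫ s in (0:ℝ)..t, g s) = ∫ s in (0:ℝ)..1, (1 - s) * g s := by
  set μ : Measure ℝ := volume.restrict (Ioc (0:ℝ) 1) with hμ
  have hμuniv : μ univ = 1 := by
    rw [hμ, Measure.restrict_apply_univ, Real.volume_Ioc]
    norm_num
  have hmap : (μ.prod μ).map Prod.snd = μ := by
    rw [Measure.map_snd_prod, hμuniv, one_smul]
  have h1 : Integrable (g ∘ Prod.snd) (μ.prod μ) := by
    have hg' : Integrable g ((μ.prod μ).map Prod.snd) := by rw [hmap]; exact hg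
    exact (integrable_map_measure hg'.aestronglyMeasurable
      measurable_snd.aemeasurable).mp hg'
  have hS : MeasurableSet {p : ℝ × ℝ | p.2 ∈ Ioc 0 p.1} :=
    (measurableSet_lt measurable_const measurable_snd).inter
      (measurableSet_le measurable_snd measurable_fst)
  have hH : Integrable
      (Function.uncurry fun t s => (Ioc (0:ℝ) t).indicator g s) (μ.prod μ) := by
    have heq : Function.uncurry (fun t s => (Ioc (0:ℝ) t).indicator g s)
        = {p : ℝ × ℝ | p.2 ∈ Ioc 0 p.1}.indicator (g ∘ Prod.snd) := by
      funext p
      by_cases h : 0 < p.2 ∧ p.2 ≤ p.1 <;>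
        simp [Function.uncurry, Set.indicator, Set.mem_Ioc, h]
    rw [heq]
    exact h1.indicator hS
  have swap := integral_integral_swap hH
  have hL : (∫ t in (0:ℝ)..1, ∫ s in (0:ℝ)..t, g s)
      = ∫ t, (∫ s, (Ioc (0:ℝ) t).indicator g s ∂μ) ∂μ := by
    rw [intervalIntegral.integral_of_le zero_le_one]
    refine setIntegral_congr_fun measurableSet_Ioc fun t ht => ?_
    rw [intervalIntegral.integral_of_le ht.1.le, integral_indicator measurableSet_Ioc,
      hμ, Measure.restrict_restrict measurableSet_Ioc,
      inter_eq_left.mpr (Ioc_subset_Ioc_right ht.2)]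
  have hR : (∫ s, (∫ t, (Ioc (0:ℝ) t).indicator g s ∂μ) ∂μ)
      = ∫ s in (0:ℝ)..1, (1 - s) * g s := by
    rw [intervalIntegral.integral_of_le zero_le_one]
    refine setIntegral_congr_fun measurableSet_Ioc fun s hs => ?_
    have heq : (fun t => (Ioc (0:ℝ) t).indicator g s)
        = fun t => (Ici s).indicator (fun _ => g s) t := by
      funext t
      by_cases h : s ≤ t
      · simp [Set.indicator, h, hs.1]
      · simp [Set.indicator, h]
    have hinter : Ici s ∩ Ioc 0 1 = Icc s 1 := by
      ext x
      simp only [mem_inter_iff, mem_Ici, mem_Ioc, mem_Icc]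
      exact ⟨fun h => ⟨h.1, h.2.2⟩, fun h => ⟨h.1, lt_of_lt_of_le hs.1 h.1, h.2⟩⟩
    rw [heq, integral_indicator measurableSet_Ici, hμ,
      Measure.restrict_restrict measurableSet_Ici, hinter, setIntegral_const,
      Real.volume_real_Icc_of_le (by linarith [hs.2] : s ≤ 1),
      smul_eq_mul]
  rw [hL, swap, hR]

theorem stmt_8 (f f' : ℝ → ℝ) (γ₁ : ℝ)
    (hac : ∀ t ∈ Icc (0:ℝ) 1, f t = f 0 + ∫ s in (0:ℝ)..t, f' s)
    (hint : IntervalIntegrable f' volume 0 1)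
    (hbd : ∀ t ∈ Icc (0:ℝ) 1, γ₁ ≤ f' t) :
    |(∫ t in (0:ℝ)..1, f t) - Real.sqrt 2 / 8 * f 0
        - (1 - Real.sqrt 2 / 4) * f (1/2) - Real.sqrt 2 / 8 * f 1|
      ≤ (1/2 - Real.sqrt 2 / 8) * ((f 1 - f 0) - γ₁) := by
  have sqrt2_nonneg : (0:ℝ) ≤ Real.sqrt 2 := Real.sqrt_nonneg 2
  have sqrt2_le : Real.sqrt 2 ≤ 2 := by
    nlinarith [Real.sq_sqrt (by norm_num : (0:ℝ) ≤ 2)]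
  set r : ℝ := Real.sqrt 2 / 8 with hrdef
  have h24 : Real.sqrt 2 / 4 = 2 * r := by rw [hrdef]; ring
  rw [h24]
  have hr0 : 0 ≤ r := by positivity
  have hr4 : r ≤ 1/4 := by rw [hrdef]; linarith
  -- basic integrability
  have hIa : IntervalIntegrable f' volume 0 (1/2) :=
    hint.mono_set (by
      rw [uIcc_of_le (by norm_num : (0:ℝ) ≤ 1/2), uIcc_of_le zero_le_one]
      exact Icc_subset_Icc le_rfl (by norm_num))
  have hIb : IntervalIntegrable f' volume (1/2) 1 :=
    hint.mono_set (by
      rw [uIcc_of_le (by norm_num : (1/2:ℝ) ≤ 1), uIcc_of_le zero_le_one]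
      exact Icc_subset_Icc (by norm_num) le_rfl)
  have hida : IntervalIntegrable (fun s => s * f' s) volume 0 (1/2) :=
    hIa.continuousOn_mul continuous_id.continuousOn
  have hidb : IntervalIntegrable (fun s => s * f' s) volume (1/2) 1 :=
    hIb.continuousOn_mul continuous_id.continuousOn
  -- value of f at endpoints
  have hfh : f (1/2) = f 0 + ∫ s in (0:ℝ)..(1/2), f' s := hac _ (by norm_num)
  have hf1 : f 1 = f 0 + ∫ s in (0:ℝ)..1, f' s := hac _ (by norm_num)
  -- abbreviations
  set A : ℝ := ∫ s in (0:ℝ)..(1/2), f' s with hA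
  set B : ℝ := ∫ s in (1/2:ℝ)..1, f' s with hB
  set P : ℝ := ∫ s in (0:ℝ)..(1/2), s * f' s with hP
  set Qq : ℝ := ∫ s in (1/2:ℝ)..1, s * f' s with hQq
  have hAB : (∫ s in (0:ℝ)..1, f' s) = A + B :=
    (intervalIntegral.integral_add_adjacent_intervals hIa hIb).symm
  -- compute ∫ f
  have hFint : IntervalIntegrable (fun t => ∫ s in (0:ℝ)..t, f' s) volume 0 1 := by
    apply ContinuousOn.intervalIntegrable
    apply intervalIntegral.continuousOn_primitive_interval
    rw [uIcc_of_le zero_le_one]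
    exact (intervalIntegrable_iff_integrableOn_Icc_of_le zero_le_one).mp hint
  have hIoc : IntegrableOn f' (Ioc (0:ℝ) 1) :=
    (intervalIntegrable_iff_integrableOn_Ioc_of_le zero_le_one).mp hint
  have key1 : (∫ t in (0:ℝ)..1, f t) = f 0 + ∫ s in (0:ℝ)..1, (1 - s) * f' s := by
    have hcongr : (∫ t in (0:ℝ)..1, f t)
        = ∫ t in (0:ℝ)..1, (f 0 + ∫ s in (0:ℝ)..t, f' s) :=
      intervalIntegral.integral_congr (fun t ht =>
        hac t (by rwa [uIcc_of_le zero_le_one] at ht))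
    rw [hcongr, intervalIntegral.integral_add intervalIntegrable_const hFint,
      intervalIntegral.integral_const, fubini_aux f' hIoc]
    norm_num
  -- expand (1-s) f'
  have honea : (∫ s in (0:ℝ)..(1/2), (1 - s) * f' s) = A - P := by
    have : (fun s => (1 - s) * f' s) = fun s => f' s - s * f' s := by
      funext s; ring
    rw [this, intervalIntegral.integral_sub hIa hida]
  have honeb : (∫ s in (1/2:ℝ)..1, (1 - s) * f' s) = B - Qq := by
    have : (fun s => (1 - s) * f' s) = fun s => f' s - s * f' s := by
      funext s; ring
    rw [this, intervalIntegral.integral_sub hIb hidb]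
  have hone : (∫ s in (0:ℝ)..1, (1 - s) * f' s) = A - P + (B - Qq) := by
    rw [← intervalIntegral.integral_add_adjacent_intervals
      (b := (1/2:ℝ)) (hIa.continuousOn_mul (by fun_prop))
      (hIb.continuousOn_mul (by fun_prop)), honea, honeb]
  -- the two kernel integrals
  have hc1 : ∫ s in (0:ℝ)..(1/2), (γ₁ * r - γ₁ * s) = γ₁ * r / 2 - γ₁ / 8 := by
    rw [intervalIntegral.integral_sub intervalIntegrable_const
        (intervalIntegral.intervalIntegrable_id.const_mul γ₁),
      intervalIntegral.integral_const_mul, intervalIntegral.integral_const_mul,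
      integral_id, intervalIntegral.integral_const, smul_eq_mul]
    ring
  have hc2 : ∫ s in (1/2:ℝ)..1, (γ₁ * (1 - r) - γ₁ * s) = γ₁ * (1 - r) / 2 - γ₁ * (3/8) := by
    rw [intervalIntegral.integral_sub intervalIntegrable_const
        (intervalIntegral.intervalIntegrable_id.const_mul γ₁),
      intervalIntegral.integral_const_mul, intervalIntegral.integral_const_mul,
      integral_id, intervalIntegral.integral_const, smul_eq_mul]
    ring
  have hI1 : (∫ s in (0:ℝ)..(1/2), (r - s) * (f' s - γ₁))
      = r * A - P - γ₁ * (r / 2 - 1/8) := by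
    have hfe : (fun s => (r - s) * (f' s - γ₁))
        = fun s => r * f' s - s * f' s - (γ₁ * r - γ₁ * s) := by
      funext s; ring
    rw [hfe, intervalIntegral.integral_sub ((hIa.const_mul r).sub hida)
        (intervalIntegrable_const.sub (intervalIntegral.intervalIntegrable_id.const_mul γ₁)),
      intervalIntegral.integral_sub (hIa.const_mul r) hida, hc1,
      intervalIntegral.integral_const_mul, ← hA, ← hP]
    ring
  have hI2 : (∫ s in (1/2:ℝ)..1, (1 - r - s) * (f' s - γ₁))
      = (1 - r) * B - Qq - γ₁ * ((1 - r) / 2 - 3/8) := by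
    have hfe : (fun s => (1 - r - s) * (f' s - γ₁))
        = fun s => (1 - r) * f' s - s * f' s - (γ₁ * (1 - r) - γ₁ * s) := by
      funext s; ring
    rw [hfe, intervalIntegral.integral_sub ((hIb.const_mul (1 - r)).sub hidb)
        (intervalIntegrable_const.sub (intervalIntegral.intervalIntegrable_id.const_mul γ₁)),
      intervalIntegral.integral_sub (hIb.const_mul (1 - r)) hidb, hc2,
      intervalIntegral.integral_const_mul, ← hB, ← hQq]
    ring
  -- the representation of Q
  have key2 : (∫ t in (0:ℝ)..1, f t) - r * f 0 - (1 - 2*r) * f (1/2) - r * f 1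
      = (∫ s in (0:ℝ)..(1/2), (r - s) * (f' s - γ₁))
        + ∫ s in (1/2:ℝ)..1, (1 - r - s) * (f' s - γ₁) := by
    rw [key1, hone, hfh, hf1, hAB, hI1, hI2]
    ring
  rw [key2]
  -- integrability of g pieces
  have hga : IntervalIntegrable (fun s => f' s - γ₁) volume 0 (1/2) :=
    hIa.sub intervalIntegrable_const
  have hgb : IntervalIntegrable (fun s => f' s - γ₁) volume (1/2) 1 :=
    hIb.sub intervalIntegrable_const
  have hK1 : IntervalIntegrable (fun s => (r - s) * (f' s - γ₁)) volume 0 (1/2) :=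
    hga.continuousOn_mul (by fun_prop)
  have hK2 : IntervalIntegrable (fun s => (1 - r - s) * (f' s - γ₁)) volume (1/2) 1 :=
    hgb.continuousOn_mul (by fun_prop)
  -- pointwise bounds
  have hb1 : (∫ s in (0:ℝ)..(1/2), |(r - s) * (f' s - γ₁)|)
      ≤ ∫ s in (0:ℝ)..(1/2), (1/2 - r) * (f' s - γ₁) := by
    apply intervalIntegral.integral_mono_on (by norm_num) hK1.abs (hga.const_mul _)
    intro x hx
    have hgx : 0 ≤ f' x - γ₁ :=
      sub_nonneg.mpr (hbd x ⟨hx.1, le_trans hx.2 (by norm_num)⟩)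
    have habs : |r - x| ≤ 1/2 - r := by
      rw [abs_le]
      constructor <;> [linarith [hx.2]; linarith [hx.1]]
    rw [abs_mul, abs_of_nonneg hgx]
    exact mul_le_mul_of_nonneg_right habs hgx
  have hb2 : (∫ s in (1/2:ℝ)..1, |(1 - r - s) * (f' s - γ₁)|)
      ≤ ∫ s in (1/2:ℝ)..1, (1/2 - r) * (f' s - γ₁) := by
    apply intervalIntegral.integral_mono_on (by norm_num) hK2.abs (hgb.const_mul _)
    intro x hx
    have hgx : 0 ≤ f' x - γ₁ :=
      sub_nonneg.mpr (hbd x ⟨le_trans (by norm_num) hx.1, hx.2⟩)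
    have habs : |1 - r - x| ≤ 1/2 - r := by
      rw [abs_le]
      constructor <;> [linarith [hx.2]; linarith [hx.1]]
    rw [abs_mul, abs_of_nonneg hgx]
    exact mul_le_mul_of_nonneg_right habs hgx
  have habs1 := intervalIntegral.abs_integral_le_integral_abs (μ := volume)
    (f := fun s => (r - s) * (f' s - γ₁)) (by norm_num : (0:ℝ) ≤ 1/2)
  have habs2 := intervalIntegral.abs_integral_le_integral_abs (μ := volume)
    (f := fun s => (1 - r - s) * (f' s - γ₁)) (by norm_num : (1/2:ℝ) ≤ 1)
  have hca : (∫ s in (0:ℝ)..(1/2), (1/2 - r) * (f' s - γ₁))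
      = (1/2 - r) * (A - γ₁ * (1/2)) := by
    rw [intervalIntegral.integral_const_mul,
      intervalIntegral.integral_sub hIa intervalIntegrable_const,
      intervalIntegral.integral_const]
    simp only [smul_eq_mul]
    ring
  have hcb : (∫ s in (1/2:ℝ)..1, (1/2 - r) * (f' s - γ₁))
      = (1/2 - r) * (B - γ₁ * (1/2)) := by
    rw [intervalIntegral.integral_const_mul,
      intervalIntegral.integral_sub hIb intervalIntegrable_const,
      intervalIntegral.integral_const]
    simp only [smul_eq_mul]
    ring
  have hfin : f 1 - f 0 = A + B := by rw [hf1, hAB]; ring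
  calc |(∫ s in (0:ℝ)..(1/2), (r - s) * (f' s - γ₁))
        + ∫ s in (1/2:ℝ)..1, (1 - r - s) * (f' s - γ₁)|
      ≤ |∫ s in (0:ℝ)..(1/2), (r - s) * (f' s - γ₁)|
        + |∫ s in (1/2:ℝ)..1, (1 - r - s) * (f' s - γ₁)| := abs_add_le _ _
    _ ≤ (1/2 - r) * (A - γ₁ * (1/2)) + (1/2 - r) * (B - γ₁ * (1/2)) := by
        rw [← hca, ← hcb]
        exact add_le_add (le_trans habs1 hb1) (le_trans habs2 hb2)
    _ = (1/2 - r) * ((f 1 - f 0) - γ₁) := by rw [hfin]; ring
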